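/- Let Z be a finite set with |Z| = D, let A be a column-stochastic D × D matrix with entries in [0,1] (each column sums to 1), and fix z ∈ Z^m. Let Ŵ = (Ŵ_1,…,Ŵ_m) have independent components with P(Ŵ_i = w) = A[w, z_i]. Then for every w ∈ Z, E[T_{Ŵ}(w)] = (A·T_z)(w), Var[T_{Ŵ}(w)] = (1/m)·∑_{z'∈Z} T_z(z')·A[w,z']·(1 − A[w,z']), and the expected perturbation error satisfies E‖T_{Ŵ} − A·T_z‖₂ ≤ 1/√m. -/

import Mathlib

open Finset

/-- The type (empirical distribution) of a sequence `z ∈ Z^m`. -/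
noncomputable def typeOf {Z : Type*} [DecidableEq Z] {m : ℕ} (z : Fin m → Z) : Z → ℝ :=
  fun a => ((Finset.univ.filter fun i => z i = a).card : ℝ) / m

section
set_option linter.unusedSectionVars false
variable {Z : Type*} [Fintype Z] [DecidableEq Z] {m : ℕ}

lemma sum_prod_eq (h : Fin m → Z → ℝ) :
    ∑ what : Fin m → Z, ∏ j, h j (what j) = ∏ j, ∑ w, h j w := by
  rw [Finset.prod_univ_sum, Fintype.piFinset_univ]

lemma typeOf_eq (y : Fin m → Z) (w : Z) :
    typeOf y w = (1 / (m:ℝ)) * ∑ i, (if y i = w then (1:ℝ) else 0) := by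
  simp only [typeOf, Finset.sum_boole, Nat.cast_id]
  ring

lemma sum_p (A : Z → Z → ℝ) (z : Fin m → Z) (hcol : ∀ z, ∑ w, A w z = 1) :
    ∑ what : Fin m → Z, ∏ j, A (what j) (z j) = 1 := by
  rw [sum_prod_eq (fun j w => A w (z j))]
  simp [hcol]

lemma oneMoment (A : Z → Z → ℝ) (z : Fin m → Z) (hcol : ∀ z, ∑ w, A w z = 1)
    (f : Z → ℝ) (i : Fin m) :
    ∑ what : Fin m → Z, (∏ j, A (what j) (z j)) * f (what i)
      = ∑ w, A w (z i) * f w := by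
  have key : ∀ what : Fin m → Z,
      (∏ j, A (what j) (z j)) * f (what i)
        = ∏ j, ((fun j w => A w (z j) * (if j = i then f w else 1)) j (what j)) := by
    intro what
    simp only
    rw [Finset.prod_mul_distrib, Finset.prod_ite_eq' Finset.univ i (fun j => f (what j))]
    simp
  rw [Finset.sum_congr rfl fun what _ => key what,
    sum_prod_eq (fun j w => A w (z j) * (if j = i then f w else 1))]
  have : ∀ j : Fin m, (∑ w, (A w (z j) * (if j = i then f w else 1)))
      = if j = i then ∑ w, A w (z i) * f w else 1 := by
    intro j
    split_ifs with hj
    · subst hj; simp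
    · simp [hcol]
  rw [Finset.prod_congr rfl fun j _ => this j,
    Finset.prod_ite_eq' Finset.univ i (fun _ => ∑ w, A w (z i) * f w)]
  simp

lemma twoMoment (A : Z → Z → ℝ) (z : Fin m → Z) (hcol : ∀ z, ∑ w, A w z = 1)
    (f g : Z → ℝ) (i k : Fin m) (hik : i ≠ k) :
    ∑ what : Fin m → Z, (∏ j, A (what j) (z j)) * (f (what i) * g (what k))
      = (∑ w, A w (z i) * f w) * (∑ w, A w (z k) * g w) := by
  have key : ∀ what : Fin m → Z,
      (∏ j, A (what j) (z j)) * (f (what i) * g (what k))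
        = ∏ j, ((fun j w => A w (z j) *
            ((if j = i then f w else 1) * (if j = k then g w else 1))) j (what j)) := by
    intro what
    simp only
    rw [Finset.prod_mul_distrib, Finset.prod_mul_distrib,
      Finset.prod_ite_eq' Finset.univ i (fun j => f (what j)),
      Finset.prod_ite_eq' Finset.univ k (fun j => g (what j))]
    simp [mul_assoc]
  rw [Finset.sum_congr rfl fun what _ => key what,
    sum_prod_eq (fun j w => A w (z j) * ((if j = i then f w else 1) * (if j = k then g w else 1)))]
  have : ∀ j : Fin m, (∑ w, A w (z j) * ((if j = i then f w else 1) * (if j = k then g w else 1)))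
      = (if j = i then ∑ w, A w (z i) * f w else 1) *
        (if j = k then ∑ w, A w (z k) * g w else 1) := by
    intro j
    by_cases h1 : j = i
    · by_cases h2 : j = k
      · exact absurd (h1 ▸ h2) hik
      · subst h1; simp [h2]
    · by_cases h2 : j = k
      · subst h2; simp [h1]
      · simp [h1, h2, hcol]
  rw [Finset.prod_congr rfl fun j _ => this j, Finset.prod_mul_distrib,
    Finset.prod_ite_eq' Finset.univ i (fun _ => ∑ w, A w (z i) * f w),
    Finset.prod_ite_eq' Finset.univ k (fun _ => ∑ w, A w (z k) * g w)]
  simp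

lemma fiberLemma (z : Fin m → Z) (f : Z → ℝ) :
    ∑ z' : Z, typeOf z z' * f z' = (1 / (m:ℝ)) * ∑ i, f (z i) := by
  have h1 : ∀ z' : Z, typeOf z z' * f z'
      = (1/(m:ℝ)) * ∑ i ∈ Finset.univ.filter (fun i => z i = z'), f (z i) := by
    intro z'
    rw [Finset.sum_congr rfl (fun i hi => by rw [(Finset.mem_filter.mp hi).2])]
    simp [typeOf]
    ring
  rw [Finset.sum_congr rfl fun z' _ => h1 z', ← Finset.mul_sum]
  congr 1
  exact Finset.sum_fiberwise Finset.univ (fun i => z i) (fun i => f (z i))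

end

/-- Mean, variance, and expected ℓ2 error of the type of independently perturbed
data: if each `Ŵ_i` is drawn independently with `P(Ŵ_i = w) = A[w, z_i]` for a
column-stochastic matrix `A` with entries in `[0,1]`, then
`E[T_Ŵ(w)] = (A·T_z)(w)`,
`Var[T_Ŵ(w)] = (1/m)·∑_{z'} T_z(z')·A[w,z']·(1 - A[w,z'])`, and
`E‖T_Ŵ - A·T_z‖₂ ≤ 1/√m`. -/
theorem perturbed_type_mean_variance_error
    {Z : Type*} [Fintype Z] [DecidableEq Z] (m : ℕ) (hm : 1 ≤ m)
    (A : Z → Z → ℝ) (hA0 : ∀ w z, 0 ≤ A w z) (hA1 : ∀ w z, A w z ≤ 1)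
    (hcol : ∀ z, ∑ w, A w z = 1) (z : Fin m → Z) :
    (∀ w : Z,
      (∑ what : Fin m → Z, (∏ i, A (what i) (z i)) * typeOf what w)
        = ∑ z' : Z, A w z' * typeOf z z') ∧
    (∀ w : Z,
      (∑ what : Fin m → Z, (∏ i, A (what i) (z i)) *
          (typeOf what w - ∑ z' : Z, A w z' * typeOf z z') ^ 2)
        = (1 / (m : ℝ)) * ∑ z' : Z, typeOf z z' * A w z' * (1 - A w z')) ∧
    (∑ what : Fin m → Z, (∏ i, A (what i) (z i)) *
        Real.sqrt (∑ w : Z, (typeOf what w - ∑ z' : Z, A w z' * typeOf z z') ^ 2))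
      ≤ 1 / Real.sqrt m := by
  have hm0 : (0:ℝ) < m := by exact_mod_cast Nat.lt_of_lt_of_le Nat.zero_lt_one hm
  set P : (Fin m → Z) → ℝ := fun what => ∏ j, A (what j) (z j) with hP
  have hPnn : ∀ what, 0 ≤ P what := fun what => Finset.prod_nonneg fun j _ => hA0 _ _
  have hPsum : ∑ what : Fin m → Z, P what = 1 := sum_p A z hcol
  -- μ in two forms
  have hmu : ∀ w : Z, (∑ z' : Z, A w z' * typeOf z z') = (1/(m:ℝ)) * ∑ i, A w (z i) := by
    intro w
    rw [← fiberLemma z (A w)]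
    exact Finset.sum_congr rfl fun z' _ => mul_comm _ _
  -- the mean
  have hmean : ∀ w : Z,
      (∑ what : Fin m → Z, P what * typeOf what w) = (1/(m:ℝ)) * ∑ i, A w (z i) := by
    intro w
    calc ∑ what : Fin m → Z, P what * typeOf what w
        = ∑ what : Fin m → Z, ∑ i, (1/(m:ℝ)) * (P what * (if what i = w then 1 else 0)) := by
          refine Finset.sum_congr rfl fun what _ => ?_
          rw [typeOf_eq]
          simp only [Finset.mul_sum]
          exact Finset.sum_congr rfl fun i _ => by ring
      _ = ∑ i, ∑ what : Fin m → Z, (1/(m:ℝ)) * (P what * (if what i = w then 1 else 0)) :=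
          Finset.sum_comm
      _ = ∑ i, (1/(m:ℝ)) * A w (z i) := by
          refine Finset.sum_congr rfl fun i _ => ?_
          rw [← Finset.mul_sum, oneMoment A z hcol (fun w' => if w' = w then 1 else 0) i]
          simp
      _ = (1/(m:ℝ)) * ∑ i, A w (z i) := by rw [Finset.mul_sum]
  have part1 : ∀ w : Z,
      (∑ what : Fin m → Z, P what * typeOf what w) = ∑ z' : Z, A w z' * typeOf z z' := by
    intro w; rw [hmean w, hmu w]
  -- second moments of indicators
  have hpair : ∀ (w : Z) (i k : Fin m),
      (∑ what : Fin m → Z, P what *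
        ((if what i = w then (1:ℝ) else 0) * (if what k = w then 1 else 0)))
      = if i = k then A w (z i) else A w (z i) * A w (z k) := by
    intro w i k
    by_cases h : i = k
    · subst h
      simp only [if_pos rfl]
      exact (oneMoment A z hcol
        (fun w' => (if w' = w then (1:ℝ) else 0) * (if w' = w then 1 else 0)) i).trans (by simp)
    · rw [twoMoment A z hcol (fun w' => if w' = w then 1 else 0)
        (fun w' => if w' = w then 1 else 0) i k h]
      simp [h]
  -- second moment of the type
  have hT2 : ∀ w : Z,
      (∑ what : Fin m → Z, P what * (typeOf what w)^2)
        = (1/(m:ℝ))^2 * ∑ i, ∑ k, (if i = k then A w (z i) else A w (z i) * A w (z k)) := by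
    intro w
    calc ∑ what : Fin m → Z, P what * (typeOf what w)^2
        = ∑ what : Fin m → Z, ∑ i, ∑ k, (1/(m:ℝ))^2 *
            (P what * ((if what i = w then (1:ℝ) else 0) * (if what k = w then 1 else 0))) := by
          refine Finset.sum_congr rfl fun what _ => ?_
          rw [typeOf_eq, mul_pow, pow_two ((∑ i, if what i = w then (1:ℝ) else 0)),
            Finset.sum_mul_sum]
          simp only [Finset.mul_sum]
          refine Finset.sum_congr rfl fun i _ => Finset.sum_congr rfl fun k _ => by ring
      _ = ∑ i, ∑ k, ∑ what : Fin m → Z, (1/(m:ℝ))^2 *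
            (P what * ((if what i = w then (1:ℝ) else 0) * (if what k = w then 1 else 0))) := by
          rw [Finset.sum_comm]
          exact Finset.sum_congr rfl fun i _ => Finset.sum_comm
      _ = ∑ i, ∑ k, (1/(m:ℝ))^2 * (if i = k then A w (z i) else A w (z i) * A w (z k)) := by
          refine Finset.sum_congr rfl fun i _ => Finset.sum_congr rfl fun k _ => ?_
          rw [← Finset.mul_sum, hpair w i k]
      _ = (1/(m:ℝ))^2 * ∑ i, ∑ k, (if i = k then A w (z i) else A w (z i) * A w (z k)) := by
          simp only [Finset.mul_sum]
  -- the diagonal decomposition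
  have hsq : ∀ w : Z,
      (∑ i, ∑ k, (if i = k then A w (z i) else A w (z i) * A w (z k)))
        = (∑ i, A w (z i)) * (∑ i, A w (z i)) + ∑ i, A w (z i) * (1 - A w (z i)) := by
    intro w
    rw [Finset.sum_mul_sum, ← Finset.sum_add_distrib]
    refine Finset.sum_congr rfl fun i _ => ?_
    have h1 : ∀ k : Fin m, (if i = k then A w (z i) else A w (z i) * A w (z k))
        = A w (z i) * A w (z k) + (if i = k then A w (z i) * (1 - A w (z i)) else 0) := by
      intro k
      by_cases h : i = k
      · subst h; simp; ring
      · simp [h]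
    rw [Finset.sum_congr rfl fun k _ => h1 k, Finset.sum_add_distrib, Finset.sum_ite_eq]
    simp
  -- the variance
  have part2 : ∀ w : Z,
      (∑ what : Fin m → Z, P what * (typeOf what w - ∑ z' : Z, A w z' * typeOf z z') ^ 2)
        = (1 / (m : ℝ)) * ∑ z' : Z, typeOf z z' * A w z' * (1 - A w z') := by
    intro w
    have expand : (∑ what : Fin m → Z,
        P what * (typeOf what w - ∑ z' : Z, A w z' * typeOf z z') ^ 2)
        = (∑ what : Fin m → Z, P what * (typeOf what w)^2)
          - 2 * (∑ z' : Z, A w z' * typeOf z z') * (∑ what : Fin m → Z, P what * typeOf what w)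
          + (∑ z' : Z, A w z' * typeOf z z')^2 * (∑ what : Fin m → Z, P what) := by
      have h : ∀ what : Fin m → Z,
          P what * (typeOf what w - ∑ z' : Z, A w z' * typeOf z z') ^ 2
          = P what * (typeOf what w)^2
            - 2 * (∑ z' : Z, A w z' * typeOf z z') * (P what * typeOf what w)
            + (∑ z' : Z, A w z' * typeOf z z')^2 * P what := fun what => by ring
      rw [Finset.sum_congr rfl fun what _ => h what, Finset.sum_add_distrib,
        Finset.sum_sub_distrib, ← Finset.mul_sum, ← Finset.mul_sum]
    have hrhs : (∑ z' : Z, typeOf z z' * A w z' * (1 - A w z'))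
        = (1/(m:ℝ)) * ∑ i, A w (z i) * (1 - A w (z i)) := by
      rw [← fiberLemma z (fun z' => A w z' * (1 - A w z'))]
      exact Finset.sum_congr rfl fun z' _ => by ring
    rw [expand, hT2 w, hsq w, hmean w, hmu w, hPsum, hrhs]
    ring
  refine ⟨part1, part2, ?_⟩
  -- part 3
  have hTznn : ∀ z' : Z, 0 ≤ typeOf z z' := by
    intro z'
    unfold typeOf
    positivity
  have hTzsum : ∑ z' : Z, typeOf z z' = 1 := by
    have := fiberLemma z (fun _ => (1:ℝ))
    simp only [mul_one] at this
    rw [this]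
    field_simp
    simp
  have hES : (∑ what : Fin m → Z,
      P what * (∑ w : Z, (typeOf what w - ∑ z' : Z, A w z' * typeOf z z') ^ 2)) ≤ 1/(m:ℝ) := by
    have hswap : (∑ what : Fin m → Z,
        P what * (∑ w : Z, (typeOf what w - ∑ z' : Z, A w z' * typeOf z z') ^ 2))
        = ∑ w : Z, ∑ what : Fin m → Z,
            P what * (typeOf what w - ∑ z' : Z, A w z' * typeOf z z') ^ 2 := by
      rw [Finset.sum_comm]
      exact Finset.sum_congr rfl fun what _ => Finset.mul_sum _ _ _
    rw [hswap, Finset.sum_congr rfl fun w _ => part2 w]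
    calc ∑ w : Z, (1/(m:ℝ)) * ∑ z' : Z, typeOf z z' * A w z' * (1 - A w z')
        = (1/(m:ℝ)) * ∑ z' : Z, typeOf z z' * ∑ w : Z, A w z' * (1 - A w z') := by
          rw [← Finset.mul_sum, Finset.sum_comm]
          congr 1
          exact Finset.sum_congr rfl fun z' _ => by
            rw [Finset.mul_sum]; exact Finset.sum_congr rfl fun w _ => by ring
      _ ≤ (1/(m:ℝ)) * ∑ z' : Z, typeOf z z' * 1 := by
          refine mul_le_mul_of_nonneg_left (Finset.sum_le_sum fun z' _ => ?_) (by positivity)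
          refine mul_le_mul_of_nonneg_left ?_ (hTznn z')
          calc ∑ w : Z, A w z' * (1 - A w z') ≤ ∑ w : Z, A w z' :=
              Finset.sum_le_sum fun w _ => by nlinarith [hA0 w z', hA1 w z']
            _ = 1 := hcol z'
      _ = 1/(m:ℝ) := by rw [Finset.sum_congr rfl fun z' _ => mul_one _, hTzsum, mul_one]
  set E : ℝ := ∑ what : Fin m → Z, P what *
      Real.sqrt (∑ w : Z, (typeOf what w - ∑ z' : Z, A w z' * typeOf z z') ^ 2) with hE
  have hEnn : 0 ≤ E :=
    Finset.sum_nonneg fun what _ => mul_nonneg (hPnn what) (Real.sqrt_nonneg _)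
  have hCS : E^2 ≤ 1/(m:ℝ) := by
    have key : E ^ 2 ≤ (∑ what : Fin m → Z, P what) * (∑ what : Fin m → Z,
        P what * (∑ w : Z, (typeOf what w - ∑ z' : Z, A w z' * typeOf z z') ^ 2)) := by
      have h1 : E = ∑ what : Fin m → Z, Real.sqrt (P what) *
          (Real.sqrt (P what) * Real.sqrt (∑ w : Z,
            (typeOf what w - ∑ z' : Z, A w z' * typeOf z z') ^ 2)) := by
        rw [hE]
        refine Finset.sum_congr rfl fun what _ => ?_
        rw [← mul_assoc, Real.mul_self_sqrt (hPnn what)]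
      have h2 := Finset.sum_mul_sq_le_sq_mul_sq Finset.univ
        (fun what => Real.sqrt (P what))
        (fun what => Real.sqrt (P what) * Real.sqrt (∑ w : Z,
          (typeOf what w - ∑ z' : Z, A w z' * typeOf z z') ^ 2))
      rw [← h1] at h2
      refine h2.trans ?_
      apply le_of_eq
      congr 1
      · exact Finset.sum_congr rfl fun what _ => Real.sq_sqrt (hPnn what)
      · refine Finset.sum_congr rfl fun what _ => ?_
        rw [mul_pow, Real.sq_sqrt (hPnn what), Real.sq_sqrt (Finset.sum_nonneg fun w _ => sq_nonneg _)]
    rw [hPsum, one_mul] at key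
    exact key.trans hES
  have : E ≤ Real.sqrt (1/(m:ℝ)) := by
    rw [show E = Real.sqrt (E^2) from (Real.sqrt_sq hEnn).symm]
    exact Real.sqrt_le_sqrt hCS
  calc E ≤ Real.sqrt (1/(m:ℝ)) := this
    _ = 1 / Real.sqrt m := by rw [one_div, Real.sqrt_inv, one_div]
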